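/- Fix an integer k ≥ 1 and let G = (ZMod 3)^k with S_k acting by permuting coordinates. Let a, b, c ∈ G be such that a has exactly α_j coordinates equal to j, b has exactly β_j, and c has exactly γ_j (j = 0,1,2), so α₀+α₁+α₂ = β₀+β₁+β₂ = γ₀+γ₁+γ₂ = k. Suppose 3 divides (α₀+β₀+γ₀) − (α₁+β₁+γ₁) and set A = ((α₀+β₀+γ₀) − (α₁+β₁+γ₁))/3, C = max(0, A − β₀ + γ₁, 2A + α₁ − β₀ + γ₁ − γ₀), D = max(−A, 0, A + α₁ − β₀ − β₂ + γ₁), E = min(A + α₁ − β₀ + γ₁, α₀ − A, γ₁). If E − C ≥ D, then M([a],[b],[c]) = (E − D − C + 1)(E − D − C + 2)/2 = binomial(E − D − C + 2, 2). If E − C < D, or if 3 does not divide (α₀+β₀+γ₀) − (α₁+β₁+γ₁), then M([a],[b],[c]) = 0. -/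

import Mathlib

/-- The orbit of `a` under the symmetric group `S_k` permuting the `k` coordinates. -/
def permOrbit {N k : ℕ} (a : Fin k → ZMod N) : Set (Fin k → ZMod N) :=
  {x | ∃ σ : Equiv.Perm (Fin k), x = fun i => a (σ i)}

/-- `T([a],[b],[c]) = {(x,y,z) ∈ [a]×[b]×[c] : x + y + z = 0}`. -/
def TripleSet (N k : ℕ) (a b c : Fin k → ZMod N) : Type :=
  {t : (Fin k → ZMod N) × (Fin k → ZMod N) × (Fin k → ZMod N) //
    t.1 ∈ permOrbit a ∧ t.2.1 ∈ permOrbit b ∧ t.2.2 ∈ permOrbit c ∧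
    t.1 + t.2.1 + t.2.2 = 0}

/-- `M([a],[b],[c])`: the number of orbits of the diagonal action of `S_k` on
`T([a],[b],[c])`, computed as the cardinality of the quotient by the orbit relation. -/
noncomputable def Morbits (N k : ℕ) (a b c : Fin k → ZMod N) : ℕ :=
  Nat.card (Quot fun t t' : TripleSet N k a b c =>
    ∃ σ : Equiv.Perm (Fin k),
      (∀ i, t'.1.1 i = t.1.1 (σ i)) ∧ (∀ i, t'.1.2.1 i = t.1.2.1 (σ i)) ∧
      (∀ i, t'.1.2.2 i = t.1.2.2 (σ i)))

/-- The number of coordinates of `a` equal to `j`. -/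
def cnt {N k : ℕ} (a : Fin k → ZMod N) (j : ZMod N) : ℕ :=
  (Finset.univ.filter fun i => a i = j).card


namespace OrbitAux
open Finset



/-- Counting is invariant under precomposition with a permutation. -/
lemma count_perm {k : ℕ} {Y : Type*} [DecidableEq Y] (g : Fin k → Y) (σ : Equiv.Perm (Fin k))
    (y : Y) :
    (univ.filter fun i => g (σ i) = y).card = (univ.filter fun i => g i = y).card := by
  apply Finset.card_equiv σ
  intro i
  simp

/-- If two functions have equal fiber counts, one is a permutation of the other. -/
lemma exists_perm_of_count_eq {k : ℕ} {Y : Type*} [DecidableEq Y] [Fintype Y]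
    (f g : Fin k → Y)
    (h : ∀ y, (univ.filter fun i => f i = y).card = (univ.filter fun i => g i = y).card) :
    ∃ σ : Equiv.Perm (Fin k), ∀ i, f i = g (σ i) := by
  have hcard : ∀ y : Y, Fintype.card {i // f i = y} = Fintype.card {i // g i = y} := by
    intro y
    rw [Fintype.card_subtype, Fintype.card_subtype]
    exact h y
  let e : ∀ y : Y, {i // f i = y} ≃ {i // g i = y} := fun y => Fintype.equivOfCardEq (hcard y)
  let σ : Fin k ≃ Fin k :=
    (Equiv.sigmaFiberEquiv f).symm.trans ((Equiv.sigmaCongrRight e).trans (Equiv.sigmaFiberEquiv g))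
  refine ⟨σ, fun i => ?_⟩
  have h1 : (Equiv.sigmaFiberEquiv f).symm i = ⟨f i, i, rfl⟩ := rfl
  have : σ i = ((e (f i)) ⟨i, rfl⟩ : {j // g j = f i}).val := by
    simp [σ, h1, Equiv.sigmaCongrRight, Equiv.sigmaFiberEquiv]
  rw [this]
  exact (((e (f i)) ⟨i, rfl⟩).property).symm

/-- Membership in the orbit is equivalent to equal counts. -/
lemma orbit_iff {N k : ℕ} (x a : Fin k → ZMod N) [NeZero N] :
    (∃ σ : Equiv.Perm (Fin k), ∀ i, x i = a (σ i)) ↔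
      ∀ j, (univ.filter fun i => x i = j).card = (univ.filter fun i => a i = j).card := by
  constructor
  · rintro ⟨σ, hσ⟩ j
    have : (univ.filter fun i => x i = j) = (univ.filter fun i => a (σ i) = j) := by
      apply filter_congr; intro i _; rw [hσ i]
    rw [this, count_perm]
  · intro h
    exact exists_perm_of_count_eq x a h


lemma disj_aux {k : ℕ} (P Q : Fin k → Prop) [DecidablePred P] [DecidablePred Q]
    (y : Fin k → ZMod 3) (c d : ZMod 3) (hcd : c ≠ d) :
    Disjoint (univ.filter fun i => P i ∧ y i = c) (univ.filter fun i => Q i ∧ y i = d) := by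
  rw [disjoint_left]
  rintro i hi hj
  simp only [mem_filter] at hi hj
  exact hcd (hi.2.2.symm.trans hj.2.2)

/-- Split a count three ways by the value of an auxiliary `ZMod 3`-valued function. -/
lemma count_split {k : ℕ} (P : Fin k → Prop) [DecidablePred P] (y : Fin k → ZMod 3) :
    (univ.filter P).card =
      (univ.filter fun i => P i ∧ y i = 0).card +
      (univ.filter fun i => P i ∧ y i = 1).card +
      (univ.filter fun i => P i ∧ y i = 2).card := by
  have tri : ∀ v : ZMod 3, v = 0 ∨ v = 1 ∨ v = 2 := by decide
  have hU : (univ.filter P) =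
      ((univ.filter fun i => P i ∧ y i = 0) ∪ (univ.filter fun i => P i ∧ y i = 1)) ∪
        (univ.filter fun i => P i ∧ y i = 2) := by
    ext i
    simp only [mem_union, mem_filter, mem_univ, true_and]
    constructor
    · intro hp
      rcases tri (y i) with h | h | h
      · exact Or.inl (Or.inl ⟨hp, h⟩)
      · exact Or.inl (Or.inr ⟨hp, h⟩)
      · exact Or.inr ⟨hp, h⟩
    · rintro ((⟨hp, _⟩ | ⟨hp, _⟩) | ⟨hp, _⟩) <;> exact hp
  rw [hU, card_union_of_disjoint, card_union_of_disjoint]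
  · exact disj_aux P P y 0 1 (by decide)
  · exact Finset.disjoint_union_left.mpr ⟨disj_aux P P y 0 2 (by decide), disj_aux P P y 1 2 (by decide)⟩


def colCnt {k : ℕ} (x y z : Fin k → ZMod 3) (w : ZMod 3 × ZMod 3 × ZMod 3) : ℕ :=
  (univ.filter fun i => (x i, y i, z i) = w).card



variable {k : ℕ} {x y z : Fin k → ZMod 3}

lemma term_xy (h : ∀ i, x i + y i + z i = 0) (p q : ZMod 3) :
    (univ.filter fun i => x i = p ∧ y i = q).card = colCnt x y z (p, q, -p - q) := by
  unfold colCnt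
  congr 1
  apply filter_congr
  intro i _
  simp only [Prod.mk.injEq]
  constructor
  · rintro ⟨h1, h2⟩
    have hi := h i
    rw [h1, h2] at hi
    exact ⟨h1, h2, by linear_combination hi⟩
  · rintro ⟨h1, h2, _⟩
    exact ⟨h1, h2⟩

lemma term_zx (h : ∀ i, x i + y i + z i = 0) (r p : ZMod 3) :
    (univ.filter fun i => z i = r ∧ x i = p).card = colCnt x y z (p, -p - r, r) := by
  unfold colCnt
  congr 1
  apply filter_congr
  intro i _
  simp only [Prod.mk.injEq]
  constructor
  · rintro ⟨h1, h2⟩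
    have hi := h i
    rw [h1, h2] at hi
    exact ⟨h2, by linear_combination hi, h1⟩
  · rintro ⟨h1, h2, h3⟩
    exact ⟨h3, h1⟩

lemma cnt_eq_x (h : ∀ i, x i + y i + z i = 0) (p : ZMod 3) :
    (univ.filter fun i => x i = p).card =
      colCnt x y z (p, 0, -p - 0) + colCnt x y z (p, 1, -p - 1) + colCnt x y z (p, 2, -p - 2) := by
  rw [count_split (fun i => x i = p) y, term_xy h, term_xy h, term_xy h]

lemma cnt_eq_y (h : ∀ i, x i + y i + z i = 0) (q : ZMod 3) :
    (univ.filter fun i => y i = q).card =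
      colCnt x y z (0, q, -0 - q) + colCnt x y z (1, q, -1 - q) + colCnt x y z (2, q, -2 - q) := by
  rw [count_split (fun i => y i = q) x]
  have e : ∀ p : ZMod 3, (univ.filter fun i => y i = q ∧ x i = p).card = colCnt x y z (p, q, -p - q) := by
    intro p
    rw [← term_xy h p q]
    congr 1
    apply filter_congr
    intro i _
    exact ⟨fun ⟨h1, h2⟩ => ⟨h2, h1⟩, fun ⟨h1, h2⟩ => ⟨h2, h1⟩⟩
  rw [e 0, e 1, e 2]

lemma cnt_eq_z (h : ∀ i, x i + y i + z i = 0) (r : ZMod 3) :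
    (univ.filter fun i => z i = r).card =
      colCnt x y z (0, -0 - r, r) + colCnt x y z (1, -1 - r, r) + colCnt x y z (2, -2 - r, r) := by
  rw [count_split (fun i => z i = r) x, term_zx h, term_zx h, term_zx h]

lemma zmod3_sum {M : Type*} [AddCommMonoid M] (g : ZMod 3 → M) :
    ∑ v : ZMod 3, g v = g 0 + g 1 + g 2 := by
  have h : (Finset.univ : Finset (ZMod 3)) = {0,1,2} := by decide
  rw [h, Finset.sum_insert (by decide), Finset.sum_insert (by decide),
    Finset.sum_singleton, add_assoc]

/-- The subtype of a sigma type with fixed first component is the fiber. -/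
def sigmaFstEquiv {W : Type*} [DecidableEq W] (β : W → Type*) (w0 : W) :
    {s : Σ w : W, β w // s.1 = w0} ≃ β w0 where
  toFun s := s.2 ▸ s.1.2
  invFun j := ⟨⟨w0, j⟩, rfl⟩
  left_inv := by rintro ⟨⟨w, j⟩, rfl⟩; rfl
  right_inv := by intro j; rfl

lemma count_of_equiv {k : ℕ} {W : Type*} [DecidableEq W] [Fintype W] (m : W → ℕ)
    (e : (Σ w : W, Fin (m w)) ≃ Fin k) (w0 : W) :
    (univ.filter fun i => (e.symm i).1 = w0).card = m w0 := by
  rw [← Fintype.card_subtype,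
    Fintype.card_congr ((Equiv.subtypeEquiv e.symm (fun i => Iff.rfl)).trans
      (sigmaFstEquiv (fun w => Fin (m w)) w0)),
    Fintype.card_fin]


def triFinset (n : ℕ) : Finset (ℕ × ℕ) :=
  (range (n+1) ×ˢ range (n+1)).filter fun q => q.1 + q.2 ≤ n

lemma triFinset_card (n : ℕ) : 2 * (triFinset n).card = (n+1) * (n+2) := by
  induction n with
  | zero => decide
  | succ n ih =>
    have hU : triFinset (n+1) = triFinset n ∪ Finset.HasAntidiagonal.antidiagonal (n+1) := by
      ext q
      simp only [triFinset, mem_union, mem_filter, mem_product, mem_range,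
        Finset.HasAntidiagonal.mem_antidiagonal]
      omega
    have hd : Disjoint (triFinset n) (Finset.HasAntidiagonal.antidiagonal (n+1)) := by
      rw [disjoint_left]
      intro q hq hq'
      simp only [triFinset, mem_filter, mem_product, mem_range] at hq
      simp only [Finset.HasAntidiagonal.mem_antidiagonal] at hq'
      omega
    rw [hU, card_union_of_disjoint hd, Finset.Nat.card_antidiagonal]
    have : 2 * ((triFinset n).card + (n + 1 + 1)) = (n+1)*(n+2) + 2*(n+2) := by omega
    rw [this]; ring

lemma natcard_tri (n : ℕ) : 2 * Nat.card {q : ℕ × ℕ // q.1 + q.2 ≤ n} = (n+1) * (n+2) := by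
  have e : {q : ℕ × ℕ // q.1 + q.2 ≤ n} ≃ {q : ℕ × ℕ // q ∈ triFinset n} :=
    Equiv.subtypeEquivRight (by
      intro q
      simp only [triFinset, mem_filter, mem_product, mem_range]
      omega)
  rw [Nat.card_congr e, Nat.card_eq_fintype_card, Fintype.card_coe]
  exact triFinset_card n

lemma natcard_region (C D E : ℤ) (h : C + D ≤ E) :
    2 * Nat.card {p : ℤ × ℤ // C ≤ p.1 ∧ D ≤ p.2 ∧ p.1 + p.2 ≤ E} =
      ((E - C - D).toNat + 1) * ((E - C - D).toNat + 2) := by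
  have e : {p : ℤ × ℤ // C ≤ p.1 ∧ D ≤ p.2 ∧ p.1 + p.2 ≤ E} ≃
      {q : ℕ × ℕ // q.1 + q.2 ≤ (E - C - D).toNat} := {
    toFun := fun p => ⟨((p.1.1 - C).toNat, (p.1.2 - D).toNat), by
      obtain ⟨⟨u, v⟩, hu, hv, he⟩ := p
      simp only
      omega⟩
    invFun := fun q => ⟨(C + q.1.1, D + q.1.2), by
      obtain ⟨⟨u, v⟩, hq⟩ := q
      simp only at hq ⊢
      omega⟩
    left_inv := by
      rintro ⟨⟨u, v⟩, hu, hv, he⟩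
      apply Subtype.ext
      simp only [Prod.mk.injEq]
      omega
    right_inv := by
      rintro ⟨⟨u, v⟩, hq⟩
      apply Subtype.ext
      simp only [Prod.mk.injEq] at hq ⊢
      omega }
  rw [Nat.card_congr e]
  exact natcard_tri _


def EQ (α0 α1 α2 β0 β1 β2 γ0 γ1 γ2 : ℕ) (m : ZMod 3 × ZMod 3 × ZMod 3 → ℕ) : Prop :=
  m ((0:ZMod 3), (0:ZMod 3), (0:ZMod 3)) + m ((0:ZMod 3), (1:ZMod 3), (2:ZMod 3)) + m ((0:ZMod 3), (2:ZMod 3), (1:ZMod 3)) = α0 ∧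
  m ((1:ZMod 3), (0:ZMod 3), (2:ZMod 3)) + m ((1:ZMod 3), (1:ZMod 3), (1:ZMod 3)) + m ((1:ZMod 3), (2:ZMod 3), (0:ZMod 3)) = α1 ∧
  m ((2:ZMod 3), (0:ZMod 3), (1:ZMod 3)) + m ((2:ZMod 3), (1:ZMod 3), (0:ZMod 3)) + m ((2:ZMod 3), (2:ZMod 3), (2:ZMod 3)) = α2 ∧
  m ((0:ZMod 3), (0:ZMod 3), (0:ZMod 3)) + m ((1:ZMod 3), (0:ZMod 3), (2:ZMod 3)) + m ((2:ZMod 3), (0:ZMod 3), (1:ZMod 3)) = β0 ∧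
  m ((0:ZMod 3), (1:ZMod 3), (2:ZMod 3)) + m ((1:ZMod 3), (1:ZMod 3), (1:ZMod 3)) + m ((2:ZMod 3), (1:ZMod 3), (0:ZMod 3)) = β1 ∧
  m ((0:ZMod 3), (2:ZMod 3), (1:ZMod 3)) + m ((1:ZMod 3), (2:ZMod 3), (0:ZMod 3)) + m ((2:ZMod 3), (2:ZMod 3), (2:ZMod 3)) = β2 ∧
  m ((0:ZMod 3), (0:ZMod 3), (0:ZMod 3)) + m ((1:ZMod 3), (2:ZMod 3), (0:ZMod 3)) + m ((2:ZMod 3), (1:ZMod 3), (0:ZMod 3)) = γ0 ∧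
  m ((0:ZMod 3), (2:ZMod 3), (1:ZMod 3)) + m ((1:ZMod 3), (1:ZMod 3), (1:ZMod 3)) + m ((2:ZMod 3), (0:ZMod 3), (1:ZMod 3)) = γ1 ∧
  m ((0:ZMod 3), (1:ZMod 3), (2:ZMod 3)) + m ((1:ZMod 3), (0:ZMod 3), (2:ZMod 3)) + m ((2:ZMod 3), (2:ZMod 3), (2:ZMod 3)) = γ2 ∧
  ∀ w : ZMod 3 × ZMod 3 × ZMod 3, w.1 + w.2.1 + w.2.2 ≠ 0 → m w = 0

lemma EQ_of_triple (h : ∀ i, x i + y i + z i = 0) :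
    EQ ((univ.filter fun i => x i = 0).card) ((univ.filter fun i => x i = 1).card)
       ((univ.filter fun i => x i = 2).card)
       ((univ.filter fun i => y i = 0).card) ((univ.filter fun i => y i = 1).card)
       ((univ.filter fun i => y i = 2).card)
       ((univ.filter fun i => z i = 0).card) ((univ.filter fun i => z i = 1).card)
       ((univ.filter fun i => z i = 2).card) (colCnt x y z) := by
  refine ⟨?_, ?_, ?_, ?_, ?_, ?_, ?_, ?_, ?_, ?_⟩
  · have hh := cnt_eq_x h (0 : ZMod 3)
    rw [show ((0:ZMod 3), (0:ZMod 3), (-0 - 0 : ZMod 3)) = ((0:ZMod 3), (0:ZMod 3), (0:ZMod 3)) from by decide] at hh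
    rw [show ((0:ZMod 3), (1:ZMod 3), (-0 - 1 : ZMod 3)) = ((0:ZMod 3), (1:ZMod 3), (2:ZMod 3)) from by decide] at hh
    rw [show ((0:ZMod 3), (2:ZMod 3), (-0 - 2 : ZMod 3)) = ((0:ZMod 3), (2:ZMod 3), (1:ZMod 3)) from by decide] at hh
    exact hh.symm
  · have hh := cnt_eq_x h (1 : ZMod 3)
    rw [show ((1:ZMod 3), (0:ZMod 3), (-1 - 0 : ZMod 3)) = ((1:ZMod 3), (0:ZMod 3), (2:ZMod 3)) from by decide] at hh
    rw [show ((1:ZMod 3), (1:ZMod 3), (-1 - 1 : ZMod 3)) = ((1:ZMod 3), (1:ZMod 3), (1:ZMod 3)) from by decide] at hh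
    rw [show ((1:ZMod 3), (2:ZMod 3), (-1 - 2 : ZMod 3)) = ((1:ZMod 3), (2:ZMod 3), (0:ZMod 3)) from by decide] at hh
    exact hh.symm
  · have hh := cnt_eq_x h (2 : ZMod 3)
    rw [show ((2:ZMod 3), (0:ZMod 3), (-2 - 0 : ZMod 3)) = ((2:ZMod 3), (0:ZMod 3), (1:ZMod 3)) from by decide] at hh
    rw [show ((2:ZMod 3), (1:ZMod 3), (-2 - 1 : ZMod 3)) = ((2:ZMod 3), (1:ZMod 3), (0:ZMod 3)) from by decide] at hh
    rw [show ((2:ZMod 3), (2:ZMod 3), (-2 - 2 : ZMod 3)) = ((2:ZMod 3), (2:ZMod 3), (2:ZMod 3)) from by decide] at hh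
    exact hh.symm
  · have hh := cnt_eq_y h (0 : ZMod 3)
    rw [show ((0:ZMod 3), (0:ZMod 3), (-0 - 0 : ZMod 3)) = ((0:ZMod 3), (0:ZMod 3), (0:ZMod 3)) from by decide] at hh
    rw [show ((1:ZMod 3), (0:ZMod 3), (-1 - 0 : ZMod 3)) = ((1:ZMod 3), (0:ZMod 3), (2:ZMod 3)) from by decide] at hh
    rw [show ((2:ZMod 3), (0:ZMod 3), (-2 - 0 : ZMod 3)) = ((2:ZMod 3), (0:ZMod 3), (1:ZMod 3)) from by decide] at hh
    exact hh.symm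
  · have hh := cnt_eq_y h (1 : ZMod 3)
    rw [show ((0:ZMod 3), (1:ZMod 3), (-0 - 1 : ZMod 3)) = ((0:ZMod 3), (1:ZMod 3), (2:ZMod 3)) from by decide] at hh
    rw [show ((1:ZMod 3), (1:ZMod 3), (-1 - 1 : ZMod 3)) = ((1:ZMod 3), (1:ZMod 3), (1:ZMod 3)) from by decide] at hh
    rw [show ((2:ZMod 3), (1:ZMod 3), (-2 - 1 : ZMod 3)) = ((2:ZMod 3), (1:ZMod 3), (0:ZMod 3)) from by decide] at hh
    exact hh.symm
  · have hh := cnt_eq_y h (2 : ZMod 3)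
    rw [show ((0:ZMod 3), (2:ZMod 3), (-0 - 2 : ZMod 3)) = ((0:ZMod 3), (2:ZMod 3), (1:ZMod 3)) from by decide] at hh
    rw [show ((1:ZMod 3), (2:ZMod 3), (-1 - 2 : ZMod 3)) = ((1:ZMod 3), (2:ZMod 3), (0:ZMod 3)) from by decide] at hh
    rw [show ((2:ZMod 3), (2:ZMod 3), (-2 - 2 : ZMod 3)) = ((2:ZMod 3), (2:ZMod 3), (2:ZMod 3)) from by decide] at hh
    exact hh.symm
  · have hh := cnt_eq_z h (0 : ZMod 3)
    rw [show ((0:ZMod 3), (-0 - 0 : ZMod 3), (0:ZMod 3)) = ((0:ZMod 3), (0:ZMod 3), (0:ZMod 3)) from by decide] at hh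
    rw [show ((1:ZMod 3), (-1 - 0 : ZMod 3), (0:ZMod 3)) = ((1:ZMod 3), (2:ZMod 3), (0:ZMod 3)) from by decide] at hh
    rw [show ((2:ZMod 3), (-2 - 0 : ZMod 3), (0:ZMod 3)) = ((2:ZMod 3), (1:ZMod 3), (0:ZMod 3)) from by decide] at hh
    exact hh.symm
  · have hh := cnt_eq_z h (1 : ZMod 3)
    rw [show ((0:ZMod 3), (-0 - 1 : ZMod 3), (1:ZMod 3)) = ((0:ZMod 3), (2:ZMod 3), (1:ZMod 3)) from by decide] at hh
    rw [show ((1:ZMod 3), (-1 - 1 : ZMod 3), (1:ZMod 3)) = ((1:ZMod 3), (1:ZMod 3), (1:ZMod 3)) from by decide] at hh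
    rw [show ((2:ZMod 3), (-2 - 1 : ZMod 3), (1:ZMod 3)) = ((2:ZMod 3), (0:ZMod 3), (1:ZMod 3)) from by decide] at hh
    exact hh.symm
  · have hh := cnt_eq_z h (2 : ZMod 3)
    rw [show ((0:ZMod 3), (-0 - 2 : ZMod 3), (2:ZMod 3)) = ((0:ZMod 3), (1:ZMod 3), (2:ZMod 3)) from by decide] at hh
    rw [show ((1:ZMod 3), (-1 - 2 : ZMod 3), (2:ZMod 3)) = ((1:ZMod 3), (0:ZMod 3), (2:ZMod 3)) from by decide] at hh
    rw [show ((2:ZMod 3), (-2 - 2 : ZMod 3), (2:ZMod 3)) = ((2:ZMod 3), (2:ZMod 3), (2:ZMod 3)) from by decide] at hh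
    exact hh.symm
  · intro w hw
    unfold colCnt
    rw [Finset.card_eq_zero]
    apply Finset.eq_empty_of_forall_notMem
    intro i hi
    rw [Finset.mem_filter] at hi
    apply hw
    rw [← hi.2]
    exact h i


variable {k : ℕ} {a b c : Fin k → ZMod 3}
variable {k : ℕ} {a b c : Fin k → ZMod 3}

lemma cnt_of_orbit {x : Fin k → ZMod 3} (h : x ∈ permOrbit a) (j : ZMod 3) :
    cnt x j = cnt a j := by
  obtain ⟨σ, rfl⟩ := h
  simpa [cnt] using count_perm a σ j

/-- The triple of coordinate functions of an element of `TripleSet`. -/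
def toSol (t : TripleSet 3 k a b c) : ZMod 3 × ZMod 3 × ZMod 3 → ℕ :=
  colCnt t.1.1 t.1.2.1 t.1.2.2

lemma sum_cond (t : TripleSet 3 k a b c) :
    ∀ i, t.1.1 i + t.1.2.1 i + t.1.2.2 i = 0 := by
  intro i
  have := congrFun t.2.2.2.2 i
  simpa using this

lemma EQ_toSol {α0 α1 α2 β0 β1 β2 γ0 γ1 γ2 : ℕ}
    (ha0 : cnt a 0 = α0) (ha1 : cnt a 1 = α1) (ha2 : cnt a 2 = α2)
    (hb0 : cnt b 0 = β0) (hb1 : cnt b 1 = β1) (hb2 : cnt b 2 = β2)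
    (hc0 : cnt c 0 = γ0) (hc1 : cnt c 1 = γ1) (hc2 : cnt c 2 = γ2)
    (t : TripleSet 3 k a b c) :
    EQ α0 α1 α2 β0 β1 β2 γ0 γ1 γ2 (toSol t) := by
  have h := EQ_of_triple (sum_cond t)
  rw [show ((univ.filter fun i => t.1.1 i = 0).card) = α0 from
        (cnt_of_orbit t.2.1 0).trans ha0,
      show ((univ.filter fun i => t.1.1 i = 1).card) = α1 from
        (cnt_of_orbit t.2.1 1).trans ha1,
      show ((univ.filter fun i => t.1.1 i = 2).card) = α2 from
        (cnt_of_orbit t.2.1 2).trans ha2,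
      show ((univ.filter fun i => t.1.2.1 i = 0).card) = β0 from
        (cnt_of_orbit t.2.2.1 0).trans hb0,
      show ((univ.filter fun i => t.1.2.1 i = 1).card) = β1 from
        (cnt_of_orbit t.2.2.1 1).trans hb1,
      show ((univ.filter fun i => t.1.2.1 i = 2).card) = β2 from
        (cnt_of_orbit t.2.2.1 2).trans hb2,
      show ((univ.filter fun i => t.1.2.2 i = 0).card) = γ0 from
        (cnt_of_orbit t.2.2.2.1 0).trans hc0,
      show ((univ.filter fun i => t.1.2.2 i = 1).card) = γ1 from
        (cnt_of_orbit t.2.2.2.1 1).trans hc1,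
      show ((univ.filter fun i => t.1.2.2 i = 2).card) = γ2 from
        (cnt_of_orbit t.2.2.2.1 2).trans hc2] at h
  exact h




set_option maxHeartbeats 1000000 in
lemma Morbits_eq_card_sol {α0 α1 α2 β0 β1 β2 γ0 γ1 γ2 : ℕ}
    (ha0 : cnt a 0 = α0) (ha1 : cnt a 1 = α1) (ha2 : cnt a 2 = α2)
    (hb0 : cnt b 0 = β0) (hb1 : cnt b 1 = β1) (hb2 : cnt b 2 = β2)
    (hc0 : cnt c 0 = γ0) (hc1 : cnt c 1 = γ1) (hc2 : cnt c 2 = γ2)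
    (hα : α0 + α1 + α2 = k) :
    Morbits 3 k a b c =
      Nat.card {m : ZMod 3 × ZMod 3 × ZMod 3 → ℕ // EQ α0 α1 α2 β0 β1 β2 γ0 γ1 γ2 m} := by
  apply Nat.card_congr
  refine Equiv.ofBijective
    (Quot.lift (fun t => (⟨toSol t, EQ_toSol ha0 ha1 ha2 hb0 hb1 hb2 hc0 hc1 hc2 t⟩ :
        {m : ZMod 3 × ZMod 3 × ZMod 3 → ℕ // EQ α0 α1 α2 β0 β1 β2 γ0 γ1 γ2 m}))
      ?_) ⟨?_, ?_⟩
  · -- respects the relation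
    rintro t t' ⟨σ, hx, hy, hz⟩
    apply Subtype.ext
    simp only
    funext w
    unfold toSol colCnt
    rw [show (univ.filter fun i => (t'.1.1 i, t'.1.2.1 i, t'.1.2.2 i) = w)
        = (univ.filter fun i => (t.1.1 (σ i), t.1.2.1 (σ i), t.1.2.2 (σ i)) = w) from by
      apply filter_congr; intro i _; rw [hx i, hy i, hz i]]
    exact (count_perm (fun i => (t.1.1 i, t.1.2.1 i, t.1.2.2 i)) σ w).symm
  · -- injective
    intro q q'
    induction q using Quot.ind with | _ t =>
    induction q' using Quot.ind with | _ t' =>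
    intro hQ0
    have hQ : toSol t = toSol t' := congrArg Subtype.val hQ0
    have hcnt : ∀ w, (univ.filter fun i => (t'.1.1 i, t'.1.2.1 i, t'.1.2.2 i) = w).card
        = (univ.filter fun i => (t.1.1 i, t.1.2.1 i, t.1.2.2 i) = w).card := by
      intro w
      have := congrFun hQ w
      unfold toSol colCnt at this
      exact this.symm
    obtain ⟨σ, hσ⟩ := exists_perm_of_count_eq _ _ hcnt
    apply Quot.sound
    refine ⟨σ, fun i => ?_, fun i => ?_, fun i => ?_⟩
    · exact congrArg (fun p => p.1) (hσ i)
    · exact congrArg (fun p => p.2.1) (hσ i)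
    · exact congrArg (fun p => p.2.2) (hσ i)
  · -- surjective
    rintro ⟨m, hm⟩
    obtain ⟨e1, e2, e3, e4, e5, e6, e7, e8, e9, hz⟩ := hm
    have hsum : ∑ w : ZMod 3 × ZMod 3 × ZMod 3, m w = k := by
      simp only [Fintype.sum_prod_type, zmod3_sum]
      have nz0 : m ((0:ZMod 3), (0:ZMod 3), (1:ZMod 3)) = 0 := hz _ (by decide)
      have nz1 : m ((0:ZMod 3), (0:ZMod 3), (2:ZMod 3)) = 0 := hz _ (by decide)
      have nz2 : m ((0:ZMod 3), (1:ZMod 3), (0:ZMod 3)) = 0 := hz _ (by decide)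
      have nz3 : m ((0:ZMod 3), (1:ZMod 3), (1:ZMod 3)) = 0 := hz _ (by decide)
      have nz4 : m ((0:ZMod 3), (2:ZMod 3), (0:ZMod 3)) = 0 := hz _ (by decide)
      have nz5 : m ((0:ZMod 3), (2:ZMod 3), (2:ZMod 3)) = 0 := hz _ (by decide)
      have nz6 : m ((1:ZMod 3), (0:ZMod 3), (0:ZMod 3)) = 0 := hz _ (by decide)
      have nz7 : m ((1:ZMod 3), (0:ZMod 3), (1:ZMod 3)) = 0 := hz _ (by decide)
      have nz8 : m ((1:ZMod 3), (1:ZMod 3), (0:ZMod 3)) = 0 := hz _ (by decide)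
      have nz9 : m ((1:ZMod 3), (1:ZMod 3), (2:ZMod 3)) = 0 := hz _ (by decide)
      have nz10 : m ((1:ZMod 3), (2:ZMod 3), (1:ZMod 3)) = 0 := hz _ (by decide)
      have nz11 : m ((1:ZMod 3), (2:ZMod 3), (2:ZMod 3)) = 0 := hz _ (by decide)
      have nz12 : m ((2:ZMod 3), (0:ZMod 3), (0:ZMod 3)) = 0 := hz _ (by decide)
      have nz13 : m ((2:ZMod 3), (0:ZMod 3), (2:ZMod 3)) = 0 := hz _ (by decide)
      have nz14 : m ((2:ZMod 3), (1:ZMod 3), (1:ZMod 3)) = 0 := hz _ (by decide)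
      have nz15 : m ((2:ZMod 3), (1:ZMod 3), (2:ZMod 3)) = 0 := hz _ (by decide)
      have nz16 : m ((2:ZMod 3), (2:ZMod 3), (0:ZMod 3)) = 0 := hz _ (by decide)
      have nz17 : m ((2:ZMod 3), (2:ZMod 3), (1:ZMod 3)) = 0 := hz _ (by decide)
      omega
    have ecard : Fintype.card (Σ w : ZMod 3 × ZMod 3 × ZMod 3, Fin (m w)) = Fintype.card (Fin k) := by
      rw [Fintype.card_sigma, Fintype.card_fin]
      simpa using hsum
    let e : (Σ w : ZMod 3 × ZMod 3 × ZMod 3, Fin (m w)) ≃ Fin k := Fintype.equivOfCardEq ecard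
    let x : Fin k → ZMod 3 := fun i => (e.symm i).1.1
    let y : Fin k → ZMod 3 := fun i => (e.symm i).1.2.1
    let z : Fin k → ZMod 3 := fun i => (e.symm i).1.2.2
    have htuple : ∀ i, (x i, y i, z i) = (e.symm i).1 := fun i => rfl
    have hcount : ∀ w, colCnt x y z w = m w := by
      intro w
      unfold colCnt
      rw [show (univ.filter fun i => (x i, y i, z i) = w)
          = (univ.filter fun i => (e.symm i).1 = w) from by
        apply filter_congr; intro i _; rw [htuple i]]
      exact count_of_equiv m e w
    have hzero : ∀ i, x i + y i + z i = 0 := by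
      intro i
      have hmem : i ∈ univ.filter fun j => (x j, y j, z j) = (e.symm i).1 := by
        simp [htuple i]
      have hpos : 0 < m (e.symm i).1 := by
        rw [← hcount (e.symm i).1]
        exact Finset.card_pos.mpr ⟨i, hmem⟩
      by_contra hne
      have : m (e.symm i).1 = 0 := hz _ (by
        rw [show ((e.symm i).1.1 + (e.symm i).1.2.1 + (e.symm i).1.2.2)
            = x i + y i + z i from rfl]
        exact hne)
      omega
    -- counts of x y z match
    have hEQ2 := EQ_of_triple hzero
    rw [show colCnt x y z = m from funext hcount] at hEQ2
    obtain ⟨f1, f2, f3, f4, f5, f6, f7, f8, f9, -⟩ := hEQ2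
    have tri : ∀ v : ZMod 3, v = 0 ∨ v = 1 ∨ v = 2 := by decide
    have horb : ∀ (u : Fin k → ZMod 3) (d : Fin k → ZMod 3),
        (∀ j, cnt u j = cnt d j) → u ∈ permOrbit d := by
      intro u d h
      obtain ⟨σ, hσ⟩ := exists_perm_of_count_eq u d (fun j => h j)
      exact ⟨σ, funext hσ⟩
    have hxa : x ∈ permOrbit a := by
      apply horb
      intro j
      rcases tri j with rfl | rfl | rfl
      · show (univ.filter fun i => x i = 0).card = cnt a 0
        omega
      · show (univ.filter fun i => x i = 1).card = cnt a 1
        omega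
      · show (univ.filter fun i => x i = 2).card = cnt a 2
        omega
    have hyb : y ∈ permOrbit b := by
      apply horb
      intro j
      rcases tri j with rfl | rfl | rfl
      · show (univ.filter fun i => y i = 0).card = cnt b 0
        omega
      · show (univ.filter fun i => y i = 1).card = cnt b 1
        omega
      · show (univ.filter fun i => y i = 2).card = cnt b 2
        omega
    have hzc : z ∈ permOrbit c := by
      apply horb
      intro j
      rcases tri j with rfl | rfl | rfl
      · show (univ.filter fun i => z i = 0).card = cnt c 0
        omega
      · show (univ.filter fun i => z i = 1).card = cnt c 1
        omega
      · show (univ.filter fun i => z i = 2).card = cnt c 2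
        omega
    have hsum0 : x + y + z = 0 := by
      funext i
      simpa using hzero i
    refine ⟨Quot.mk _ ⟨(x, y, z), hxa, hyb, hzc, hsum0⟩, ?_⟩
    apply Subtype.ext
    simp only
    exact funext hcount



def solOfPair (α0 α1 β0 β2 γ0 γ1 : ℕ) (A u v : ℤ) (w : ZMod 3 × ZMod 3 × ZMod 3) : ℕ :=
  (
  if w = ((0:ZMod 3), (0:ZMod 3), (0:ZMod 3)) then v + A
  else
  if w = ((0:ZMod 3), (1:ZMod 3), (2:ZMod 3)) then (α0:ℤ) - A - u - v
  else
  if w = ((0:ZMod 3), (2:ZMod 3), (1:ZMod 3)) then u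
  else
  if w = ((1:ZMod 3), (0:ZMod 3), (2:ZMod 3)) then u - (A - (β0:ℤ) + (γ1:ℤ))
  else
  if w = ((1:ZMod 3), (1:ZMod 3), (1:ZMod 3)) then v
  else
  if w = ((1:ZMod 3), (2:ZMod 3), (0:ZMod 3)) then (A + (α1:ℤ) - (β0:ℤ) + (γ1:ℤ)) - u - v
  else
  if w = ((2:ZMod 3), (0:ZMod 3), (1:ZMod 3)) then (γ1:ℤ) - u - v
  else
  if w = ((2:ZMod 3), (1:ZMod 3), (0:ZMod 3)) then u - (2*A + (α1:ℤ) - (β0:ℤ) + (γ1:ℤ) - (γ0:ℤ))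
  else
  if w = ((2:ZMod 3), (2:ZMod 3), (2:ZMod 3)) then v - (A + (α1:ℤ) - (β0:ℤ) - (β2:ℤ) + (γ1:ℤ))
  else
  0).toNat

variable {α0 α1 α2 β0 β1 β2 γ0 γ1 γ2 : ℕ} {A u v : ℤ}

lemma solOfPair_eval_000 : solOfPair α0 α1 β0 β2 γ0 γ1 A u v ((0:ZMod 3), (0:ZMod 3), (0:ZMod 3)) = (v + A).toNat := by
  unfold solOfPair
  rw [if_pos rfl]
lemma solOfPair_eval_012 : solOfPair α0 α1 β0 β2 γ0 γ1 A u v ((0:ZMod 3), (1:ZMod 3), (2:ZMod 3)) = ((α0:ℤ) - A - u - v).toNat := by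
  unfold solOfPair
  rw [if_neg (show ¬(((0:ZMod 3), (1:ZMod 3), (2:ZMod 3)) = ((0:ZMod 3), (0:ZMod 3), (0:ZMod 3))) by decide), if_pos rfl]
lemma solOfPair_eval_021 : solOfPair α0 α1 β0 β2 γ0 γ1 A u v ((0:ZMod 3), (2:ZMod 3), (1:ZMod 3)) = (u).toNat := by
  unfold solOfPair
  rw [if_neg (show ¬(((0:ZMod 3), (2:ZMod 3), (1:ZMod 3)) = ((0:ZMod 3), (0:ZMod 3), (0:ZMod 3))) by decide), if_neg (show ¬(((0:ZMod 3), (2:ZMod 3), (1:ZMod 3)) = ((0:ZMod 3), (1:ZMod 3), (2:ZMod 3))) by decide), if_pos rfl]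
lemma solOfPair_eval_102 : solOfPair α0 α1 β0 β2 γ0 γ1 A u v ((1:ZMod 3), (0:ZMod 3), (2:ZMod 3)) = (u - (A - (β0:ℤ) + (γ1:ℤ))).toNat := by
  unfold solOfPair
  rw [if_neg (show ¬(((1:ZMod 3), (0:ZMod 3), (2:ZMod 3)) = ((0:ZMod 3), (0:ZMod 3), (0:ZMod 3))) by decide), if_neg (show ¬(((1:ZMod 3), (0:ZMod 3), (2:ZMod 3)) = ((0:ZMod 3), (1:ZMod 3), (2:ZMod 3))) by decide), if_neg (show ¬(((1:ZMod 3), (0:ZMod 3), (2:ZMod 3)) = ((0:ZMod 3), (2:ZMod 3), (1:ZMod 3))) by decide), if_pos rfl]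
lemma solOfPair_eval_111 : solOfPair α0 α1 β0 β2 γ0 γ1 A u v ((1:ZMod 3), (1:ZMod 3), (1:ZMod 3)) = (v).toNat := by
  unfold solOfPair
  rw [if_neg (show ¬(((1:ZMod 3), (1:ZMod 3), (1:ZMod 3)) = ((0:ZMod 3), (0:ZMod 3), (0:ZMod 3))) by decide), if_neg (show ¬(((1:ZMod 3), (1:ZMod 3), (1:ZMod 3)) = ((0:ZMod 3), (1:ZMod 3), (2:ZMod 3))) by decide), if_neg (show ¬(((1:ZMod 3), (1:ZMod 3), (1:ZMod 3)) = ((0:ZMod 3), (2:ZMod 3), (1:ZMod 3))) by decide), if_neg (show ¬(((1:ZMod 3), (1:ZMod 3), (1:ZMod 3)) = ((1:ZMod 3), (0:ZMod 3), (2:ZMod 3))) by decide), if_pos rfl]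
lemma solOfPair_eval_120 : solOfPair α0 α1 β0 β2 γ0 γ1 A u v ((1:ZMod 3), (2:ZMod 3), (0:ZMod 3)) = ((A + (α1:ℤ) - (β0:ℤ) + (γ1:ℤ)) - u - v).toNat := by
  unfold solOfPair
  rw [if_neg (show ¬(((1:ZMod 3), (2:ZMod 3), (0:ZMod 3)) = ((0:ZMod 3), (0:ZMod 3), (0:ZMod 3))) by decide), if_neg (show ¬(((1:ZMod 3), (2:ZMod 3), (0:ZMod 3)) = ((0:ZMod 3), (1:ZMod 3), (2:ZMod 3))) by decide), if_neg (show ¬(((1:ZMod 3), (2:ZMod 3), (0:ZMod 3)) = ((0:ZMod 3), (2:ZMod 3), (1:ZMod 3))) by decide), if_neg (show ¬(((1:ZMod 3), (2:ZMod 3), (0:ZMod 3)) = ((1:ZMod 3), (0:ZMod 3), (2:ZMod 3))) by decide), if_neg (show ¬(((1:ZMod 3), (2:ZMod 3), (0:ZMod 3)) = ((1:ZMod 3), (1:ZMod 3), (1:ZMod 3))) by decide), if_pos rfl]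
lemma solOfPair_eval_201 : solOfPair α0 α1 β0 β2 γ0 γ1 A u v ((2:ZMod 3), (0:ZMod 3), (1:ZMod 3)) = ((γ1:ℤ) - u - v).toNat := by
  unfold solOfPair
  rw [if_neg (show ¬(((2:ZMod 3), (0:ZMod 3), (1:ZMod 3)) = ((0:ZMod 3), (0:ZMod 3), (0:ZMod 3))) by decide), if_neg (show ¬(((2:ZMod 3), (0:ZMod 3), (1:ZMod 3)) = ((0:ZMod 3), (1:ZMod 3), (2:ZMod 3))) by decide), if_neg (show ¬(((2:ZMod 3), (0:ZMod 3), (1:ZMod 3)) = ((0:ZMod 3), (2:ZMod 3), (1:ZMod 3))) by decide), if_neg (show ¬(((2:ZMod 3), (0:ZMod 3), (1:ZMod 3)) = ((1:ZMod 3), (0:ZMod 3), (2:ZMod 3))) by decide), if_neg (show ¬(((2:ZMod 3), (0:ZMod 3), (1:ZMod 3)) = ((1:ZMod 3), (1:ZMod 3), (1:ZMod 3))) by decide), if_neg (show ¬(((2:ZMod 3), (0:ZMod 3), (1:ZMod 3)) = ((1:ZMod 3), (2:ZMod 3), (0:ZMod 3))) by decide), if_pos rfl]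
lemma solOfPair_eval_210 : solOfPair α0 α1 β0 β2 γ0 γ1 A u v ((2:ZMod 3), (1:ZMod 3), (0:ZMod 3)) = (u - (2*A + (α1:ℤ) - (β0:ℤ) + (γ1:ℤ) - (γ0:ℤ))).toNat := by
  unfold solOfPair
  rw [if_neg (show ¬(((2:ZMod 3), (1:ZMod 3), (0:ZMod 3)) = ((0:ZMod 3), (0:ZMod 3), (0:ZMod 3))) by decide), if_neg (show ¬(((2:ZMod 3), (1:ZMod 3), (0:ZMod 3)) = ((0:ZMod 3), (1:ZMod 3), (2:ZMod 3))) by decide), if_neg (show ¬(((2:ZMod 3), (1:ZMod 3), (0:ZMod 3)) = ((0:ZMod 3), (2:ZMod 3), (1:ZMod 3))) by decide), if_neg (show ¬(((2:ZMod 3), (1:ZMod 3), (0:ZMod 3)) = ((1:ZMod 3), (0:ZMod 3), (2:ZMod 3))) by decide), if_neg (show ¬(((2:ZMod 3), (1:ZMod 3), (0:ZMod 3)) = ((1:ZMod 3), (1:ZMod 3), (1:ZMod 3))) by decide), if_neg (show ¬(((2:ZMod 3), (1:ZMod 3), (0:ZMod 3)) = ((1:ZMod 3), (2:ZMod 3),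 (0:ZMod 3))) by decide), if_neg (show ¬(((2:ZMod 3), (1:ZMod 3), (0:ZMod 3)) = ((2:ZMod 3), (0:ZMod 3), (1:ZMod 3))) by decide), if_pos rfl]
lemma solOfPair_eval_222 : solOfPair α0 α1 β0 β2 γ0 γ1 A u v ((2:ZMod 3), (2:ZMod 3), (2:ZMod 3)) = (v - (A + (α1:ℤ) - (β0:ℤ) - (β2:ℤ) + (γ1:ℤ))).toNat := by
  unfold solOfPair
  rw [if_neg (show ¬(((2:ZMod 3), (2:ZMod 3), (2:ZMod 3)) = ((0:ZMod 3), (0:ZMod 3), (0:ZMod 3))) by decide), if_neg (show ¬(((2:ZMod 3), (2:ZMod 3), (2:ZMod 3)) = ((0:ZMod 3), (1:ZMod 3), (2:ZMod 3))) by decide), if_neg (show ¬(((2:ZMod 3), (2:ZMod 3), (2:ZMod 3)) = ((0:ZMod 3), (2:ZMod 3), (1:ZMod 3))) by decide), if_neg (show ¬(((2:ZMod 3), (2:ZMod 3), (2:ZMod 3)) = ((1:ZMod 3), (0:ZMod 3), (2:ZMod 3))) by decide), if_neg (show ¬(((2:ZMod 3), (2:ZMod 3), (2:ZMod 3)) =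 ((1:ZMod 3), (1:ZMod 3), (1:ZMod 3))) by decide), if_neg (show ¬(((2:ZMod 3), (2:ZMod 3), (2:ZMod 3)) = ((1:ZMod 3), (2:ZMod 3), (0:ZMod 3))) by decide), if_neg (show ¬(((2:ZMod 3), (2:ZMod 3), (2:ZMod 3)) = ((2:ZMod 3), (0:ZMod 3), (1:ZMod 3))) by decide), if_neg (show ¬(((2:ZMod 3), (2:ZMod 3), (2:ZMod 3)) = ((2:ZMod 3), (1:ZMod 3), (0:ZMod 3))) by decide), if_pos rfl]

lemma solOfPair_zero (w : ZMod 3 × ZMod 3 × ZMod 3) (hw : w.1 + w.2.1 + w.2.2 ≠ 0) :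
    solOfPair α0 α1 β0 β2 γ0 γ1 A u v w = 0 := by
  have h27 : ∀ w : ZMod 3 × ZMod 3 × ZMod 3, w.1 + w.2.1 + w.2.2 ≠ 0 →
      (w ≠ ((0:ZMod 3), (0:ZMod 3), (0:ZMod 3)) ∧ w ≠ ((0:ZMod 3), (1:ZMod 3), (2:ZMod 3)) ∧ w ≠ ((0:ZMod 3), (2:ZMod 3), (1:ZMod 3)) ∧ w ≠ ((1:ZMod 3), (0:ZMod 3), (2:ZMod 3)) ∧ w ≠ ((1:ZMod 3), (1:ZMod 3), (1:ZMod 3)) ∧ w ≠ ((1:ZMod 3), (2:ZMod 3), (0:ZMod 3)) ∧ w ≠ ((2:ZMod 3), (0:ZMod 3), (1:ZMod 3)) ∧ w ≠ ((2:ZMod 3), (1:ZMod 3), (0:ZMod 3)) ∧ w ≠ ((2:ZMod 3), (2:ZMod 3), (2:ZMod 3))) := by decide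
  obtain ⟨n1, n2, n3, n4, n5, n6, n7, n8, n9⟩ := h27 w hw
  unfold solOfPair
  rw [if_neg n1, if_neg n2, if_neg n3, if_neg n4, if_neg n5, if_neg n6, if_neg n7,
    if_neg n8, if_neg n9]
  rfl


variable {k : ℕ}

set_option maxHeartbeats 3000000 in
def sol_equiv {α0 α1 α2 β0 β1 β2 γ0 γ1 γ2 : ℕ} {A : ℤ}
    (hA : 3 * A = ((α0 : ℤ) + β0 + γ0) - ((α1 : ℤ) + β1 + γ1))
    (hα : α0 + α1 + α2 = k) (hβ : β0 + β1 + β2 = k) (hγ : γ0 + γ1 + γ2 = k) :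
    {m : ZMod 3 × ZMod 3 × ZMod 3 → ℕ // EQ α0 α1 α2 β0 β1 β2 γ0 γ1 γ2 m} ≃
    {p : ℤ × ℤ // max 0 (max (A - β0 + γ1) (2 * A + α1 - β0 + γ1 - γ0)) ≤ p.1 ∧
       max (-A) (max 0 (A + α1 - β0 - β2 + γ1)) ≤ p.2 ∧
       p.1 + p.2 ≤ min (A + α1 - β0 + γ1) (min ((α0 : ℤ) - A) (γ1 : ℤ))} := {
  toFun := fun m => ⟨((m.1 ((0:ZMod 3), (2:ZMod 3), (1:ZMod 3)) : ℤ), (m.1 ((1:ZMod 3), (1:ZMod 3), (1:ZMod 3)) : ℤ)), by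
    obtain ⟨e1, e2, e3, e4, e5, e6, e7, e8, e9, hz⟩ := m.2
    refine ⟨?_, ?_, ?_⟩ <;> simp only [max_le_iff, le_min_iff] <;> omega⟩,
  invFun := fun p => ⟨solOfPair α0 α1 β0 β2 γ0 γ1 A p.1.1 p.1.2, by
    obtain ⟨⟨u, v⟩, h1, h2, h3⟩ := p
    simp only [max_le_iff, le_min_iff] at h1 h2 h3
    refine ⟨?_, ?_, ?_, ?_, ?_, ?_, ?_, ?_, ?_, fun w hw => solOfPair_zero w hw⟩ <;>
      simp only [solOfPair_eval_000, solOfPair_eval_012, solOfPair_eval_021, solOfPair_eval_102, solOfPair_eval_111, solOfPair_eval_120, solOfPair_eval_201, solOfPair_eval_210, solOfPair_eval_222] <;> omega⟩,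
  left_inv := by
    rintro ⟨m, e1, e2, e3, e4, e5, e6, e7, e8, e9, hz⟩
    apply Subtype.ext
    funext w
    simp only
    have h10 : ∀ w : ZMod 3 × ZMod 3 × ZMod 3,
        w = ((0:ZMod 3), (0:ZMod 3), (0:ZMod 3)) ∨ w = ((0:ZMod 3), (1:ZMod 3), (2:ZMod 3)) ∨ w = ((0:ZMod 3), (2:ZMod 3), (1:ZMod 3)) ∨ w = ((1:ZMod 3), (0:ZMod 3), (2:ZMod 3)) ∨ w = ((1:ZMod 3), (1:ZMod 3), (1:ZMod 3)) ∨ w = ((1:ZMod 3), (2:ZMod 3), (0:ZMod 3)) ∨ w = ((2:ZMod 3), (0:ZMod 3), (1:ZMod 3)) ∨ w = ((2:ZMod 3), (1:ZMod 3), (0:ZMod 3)) ∨ w = ((2:ZMod 3), (2:ZMod 3), (2:ZMod 3)) ∨ (w.1 + w.2.1 + w.2.2 ≠ 0) := by decide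
    rcases h10 w with rfl|rfl|rfl|rfl|rfl|rfl|rfl|rfl|rfl|hw
    all_goals first
      | exact (solOfPair_zero w hw).trans (hz w hw).symm
      | (simp only [solOfPair_eval_000, solOfPair_eval_012, solOfPair_eval_021, solOfPair_eval_102, solOfPair_eval_111, solOfPair_eval_120, solOfPair_eval_201, solOfPair_eval_210, solOfPair_eval_222]; omega)
  right_inv := by
    rintro ⟨⟨u, v⟩, h1, h2, h3⟩
    simp only [max_le_iff, le_min_iff] at h1 h2 h3
    apply Subtype.ext
    refine Prod.ext ?_ ?_ <;>
      simp only [solOfPair_eval_000, solOfPair_eval_012, solOfPair_eval_021, solOfPair_eval_102, solOfPair_eval_111, solOfPair_eval_120, solOfPair_eval_201, solOfPair_eval_210, solOfPair_eval_222] <;> omega }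

lemma sol_empty_of_not_dvd {α0 α1 α2 β0 β1 β2 γ0 γ1 γ2 : ℕ}
    (hnd : ¬ (3 : ℤ) ∣ (((α0 : ℤ) + β0 + γ0) - ((α1 : ℤ) + β1 + γ1))) :
    IsEmpty {m : ZMod 3 × ZMod 3 × ZMod 3 → ℕ // EQ α0 α1 α2 β0 β1 β2 γ0 γ1 γ2 m} :=
  ⟨fun m => by
    obtain ⟨e1, e2, e3, e4, e5, e6, e7, e8, e9, hz⟩ := m.2
    omega⟩

end OrbitAux

theorem typeA_rank3_orbit_count (k : ℕ) (hk : 1 ≤ k)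
    (a b c : Fin k → ZMod 3)
    (α0 α1 α2 β0 β1 β2 γ0 γ1 γ2 : ℕ)
    (ha0 : cnt a 0 = α0) (ha1 : cnt a 1 = α1) (ha2 : cnt a 2 = α2)
    (hb0 : cnt b 0 = β0) (hb1 : cnt b 1 = β1) (hb2 : cnt b 2 = β2)
    (hc0 : cnt c 0 = γ0) (hc1 : cnt c 1 = γ1) (hc2 : cnt c 2 = γ2)
    (hα : α0 + α1 + α2 = k) (hβ : β0 + β1 + β2 = k) (hγ : γ0 + γ1 + γ2 = k) :
    (∀ A : ℤ, 3 * A = ((α0 : ℤ) + β0 + γ0) - ((α1 : ℤ) + β1 + γ1) →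
      ∀ C D E : ℤ,
        C = max 0 (max (A - β0 + γ1) (2 * A + α1 - β0 + γ1 - γ0)) →
        D = max (-A) (max 0 (A + α1 - β0 - β2 + γ1)) →
        E = min (A + α1 - β0 + γ1) (min ((α0 : ℤ) - A) (γ1 : ℤ)) →
        ((D ≤ E - C →
            (Morbits 3 k a b c : ℤ) = (E - D - C + 1) * (E - D - C + 2) / 2 ∧
            Morbits 3 k a b c = Nat.choose (E - D - C + 2).toNat 2) ∧
         (E - C < D → Morbits 3 k a b c = 0))) ∧
    (¬ (3 : ℤ) ∣ (((α0 : ℤ) + β0 + γ0) - ((α1 : ℤ) + β1 + γ1)) →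
      Morbits 3 k a b c = 0) := by
  have hM := OrbitAux.Morbits_eq_card_sol ha0 ha1 ha2 hb0 hb1 hb2 hc0 hc1 hc2 hα
  constructor
  · intro A hA C D E hC hD hE
    subst hC hD hE
    have hM2 : Morbits 3 k a b c =
        Nat.card {p : ℤ × ℤ //
          max 0 (max (A - β0 + γ1) (2 * A + α1 - β0 + γ1 - γ0)) ≤ p.1 ∧
          max (-A) (max 0 (A + α1 - β0 - β2 + γ1)) ≤ p.2 ∧
          p.1 + p.2 ≤ min (A + α1 - β0 + γ1) (min ((α0 : ℤ) - A) (γ1 : ℤ))} := by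
      rw [hM]
      exact Nat.card_congr (OrbitAux.sol_equiv hA hα hβ hγ)
    set C := max 0 (max (A - β0 + γ1) (2 * A + α1 - β0 + γ1 - γ0)) with hC
    set D := max (-A) (max 0 (A + α1 - β0 - β2 + γ1)) with hD
    set E := min (A + α1 - β0 + γ1) (min ((α0 : ℤ) - A) (γ1 : ℤ)) with hE
    constructor
    · intro hDE
      have hCD : C + D ≤ E := by omega
      have h2 := OrbitAux.natcard_region C D E hCD
      rw [← hM2] at h2
      set n := (E - C - D).toNat with hn
      have hn' : (n : ℤ) = E - C - D := by omega
      have h2' : 2 * (Morbits 3 k a b c : ℤ) = ((n : ℤ) + 1) * ((n : ℤ) + 2) := by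
        exact_mod_cast congrArg (Nat.cast : ℕ → ℤ) h2
      constructor
      · rw [show E - D - C = (n : ℤ) from by omega, ← h2']
        omega
      · have ht : (E - D - C + 2).toNat = n + 2 := by omega
        rw [ht, Nat.choose_two_right,
          show (n + 2) * (n + 2 - 1) = (n + 1) * (n + 2) from by
            rw [show n + 2 - 1 = n + 1 from rfl]; ring,
          ← h2]
        omega
    · intro hlt
      rw [hM2]
      have : IsEmpty {p : ℤ × ℤ // C ≤ p.1 ∧ D ≤ p.2 ∧ p.1 + p.2 ≤ E} :=
        ⟨fun p => by
          obtain ⟨⟨u, v⟩, h1, h2, h3⟩ := p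
          exact absurd hlt (by omega)⟩
      exact Nat.card_of_isEmpty
  · intro hnd
    rw [hM]
    have := OrbitAux.sol_empty_of_not_dvd (α2 := α2) (β1 := β1) (β2 := β2) (γ2 := γ2) hnd
    exact Nat.card_of_isEmpty
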